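/- Let r₁, …, rₙ : [0,∞) → ℝ be continuous and strictly positive (the failure rates of n independent components), and let r = r₁ + ⋯ + rₙ (the failure rate of the series system). Then for every t > 0 the geometric mean failure rate of the series system satisfies G(r)(t) ≥ n·(∏_{i=1}^n G(rᵢ)(t))^{1/n}, where G(f)(t) = exp((1/t)∫₀ᵗ ln f(u) du); the right-hand side is n times the discrete geometric mean of the component geometric mean failure rates. -/

import Mathlib

set_option maxHeartbeats 1000000

lemma pointwise_amgm_log {n : ℕ} (hn : 0 < n) (z : Fin n → ℝ) (hz : ∀ i, 0 < z i) :
    Real.log n + (1 / n) * ∑ i, Real.log (z i) ≤ Real.log (∑ i, z i) := by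
  have hn' : (0:ℝ) < n := Nat.cast_pos.mpr hn
  have hgm : ∏ i, z i ^ ((n:ℝ)⁻¹) ≤ ∑ i, (n:ℝ)⁻¹ * z i :=
    Real.geom_mean_le_arith_mean_weighted Finset.univ _ z
      (fun i _ => by positivity) (by simp [Finset.card_univ, mul_inv_cancel₀ hn'.ne'])
      (fun i _ => (hz i).le)
  have hsum : ∑ i, (n:ℝ)⁻¹ * z i = (n:ℝ)⁻¹ * ∑ i, z i := by
    rw [Finset.mul_sum]
  have hprodpos : 0 < ∏ i, z i ^ ((n:ℝ)⁻¹) :=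
    Finset.prod_pos fun i _ => Real.rpow_pos_of_pos (hz i) _
  have h2 : (n:ℝ) * ∏ i, z i ^ ((n:ℝ)⁻¹) ≤ ∑ i, z i := by
    rw [hsum] at hgm
    calc (n:ℝ) * ∏ i, z i ^ ((n:ℝ)⁻¹) ≤ (n:ℝ) * ((n:ℝ)⁻¹ * ∑ i, z i) := by
          exact mul_le_mul_of_nonneg_left hgm hn'.le
      _ = ∑ i, z i := by field_simp
  have := Real.log_le_log (by positivity) h2
  calc Real.log n + (1 / n) * ∑ i, Real.log (z i)
      = Real.log ((n:ℝ) * ∏ i, z i ^ ((n:ℝ)⁻¹)) := by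
        rw [Real.log_mul hn'.ne' hprodpos.ne', Real.log_prod
          (fun i _ => (Real.rpow_pos_of_pos (hz i) _).ne')]
        congr 1
        rw [Finset.mul_sum]
        exact Finset.sum_congr rfl fun i _ => by
          rw [Real.log_rpow (hz i)]; ring
    _ ≤ Real.log (∑ i, z i) := this

theorem series_system_GFR_lower_bound
    (n : ℕ) (hn : 0 < n) (r : Fin n → ℝ → ℝ)
    (hc : ∀ i, ContinuousOn (r i) (Set.Ici 0))
    (hpos : ∀ i, ∀ u ∈ Set.Ici (0 : ℝ), 0 < r i u) :
    ∀ t > (0:ℝ),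
      (n : ℝ) *
          (∏ i, Real.exp ((1 / t) * ∫ u in (0:ℝ)..t, Real.log (r i u))) ^
            ((1 : ℝ) / n) ≤
        Real.exp ((1 / t) * ∫ u in (0:ℝ)..t, Real.log (∑ i, r i u)) := by
  intro t ht
  haveI : Nonempty (Fin n) := Fin.pos_iff_nonempty.mp hn
  have hn' : (0:ℝ) < n := Nat.cast_pos.mpr hn
  set a : Fin n → ℝ := fun i => (1 / t) * ∫ u in (0:ℝ)..t, Real.log (r i u) with ha
  -- integrability of each log (r i)
  have hsub : Set.uIcc (0:ℝ) t ⊆ Set.Ici 0 := by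
    rw [Set.uIcc_of_le ht.le]
    exact fun x hx => hx.1
  have hint : ∀ i, IntervalIntegrable (fun u => Real.log (r i u)) MeasureTheory.volume 0 t := by
    intro i
    apply ContinuousOn.intervalIntegrable
    exact Real.continuousOn_log.comp ((hc i).mono hsub)
      (fun x hx => (hpos i x (hsub hx)).ne')
  have hintS : IntervalIntegrable (fun u => Real.log (∑ i, r i u)) MeasureTheory.volume 0 t := by
    apply ContinuousOn.intervalIntegrable
    refine Real.continuousOn_log.comp (continuousOn_finset_sum _ fun i _ => (hc i).mono hsub)
      (fun x hx => ?_)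
    exact (Finset.sum_pos (fun i _ => hpos i x (hsub hx)) Finset.univ_nonempty).ne'
  have hintG : IntervalIntegrable
      (fun u => Real.log n + (1 / n) * ∑ i, Real.log (r i u)) MeasureTheory.volume 0 t := by
    apply ContinuousOn.intervalIntegrable
    apply continuousOn_const.add
    apply continuousOn_const.mul
    exact continuousOn_finset_sum _ fun i _ =>
      Real.continuousOn_log.comp ((hc i).mono hsub)
        (fun x hx => (hpos i x (hsub hx)).ne')
  have hmono : ∫ u in (0:ℝ)..t, (Real.log n + (1 / n) * ∑ i, Real.log (r i u))
      ≤ ∫ u in (0:ℝ)..t, Real.log (∑ i, r i u) := by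
    apply intervalIntegral.integral_mono_on ht.le hintG hintS
    intro u hu
    exact pointwise_amgm_log hn (fun i => r i u) (fun i => hpos i u hu.1)
  have hcalc : ∫ u in (0:ℝ)..t, (Real.log n + (1 / n) * ∑ i, Real.log (r i u))
      = t * Real.log n + (1 / n) * ∑ i, ∫ u in (0:ℝ)..t, Real.log (r i u) := by
    have h2 : IntervalIntegrable (fun u => (1 / (n:ℝ)) * ∑ i, Real.log (r i u))
        MeasureTheory.volume 0 t := by
      apply ContinuousOn.intervalIntegrable
      apply continuousOn_const.mul
      exact continuousOn_finset_sum _ fun i _ =>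
        Real.continuousOn_log.comp ((hc i).mono hsub)
          (fun x hx => (hpos i x (hsub hx)).ne')
    rw [intervalIntegral.integral_add intervalIntegrable_const h2,
      intervalIntegral.integral_const,
      intervalIntegral.integral_const_mul,
      intervalIntegral.integral_finset_sum (fun i _ => hint i)]
    simp [smul_eq_mul]
  -- rewrite LHS
  have hLHS : (n : ℝ) * (∏ i, Real.exp (a i)) ^ ((1 : ℝ) / n)
      = Real.exp (Real.log n + (1 / n) * ∑ i, a i) := by
    have hcomm : (∑ i, a i) * (1/(n:ℝ)) = (1/(n:ℝ)) * ∑ i, a i := mul_comm _ _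
    rw [← Real.exp_sum, Real.rpow_def_of_pos (Real.exp_pos _), Real.log_exp,
      Real.exp_add, Real.exp_log hn', hcomm]
  rw [hLHS, Real.exp_le_exp]
  have : (1 / t) * (t * Real.log n + (1 / n) * ∑ i, ∫ u in (0:ℝ)..t, Real.log (r i u))
      ≤ (1 / t) * ∫ u in (0:ℝ)..t, Real.log (∑ i, r i u) := by
    apply mul_le_mul_of_nonneg_left _ (by positivity)
    rw [← hcalc]; exact hmono
  calc Real.log n + (1 / n) * ∑ i, a i
      = (1 / t) * (t * Real.log n + (1 / n) * ∑ i, ∫ u in (0:ℝ)..t, Real.log (r i u)) := by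
        have htne : t ≠ 0 := ht.ne'
        simp only [ha]
        rw [mul_add, Finset.mul_sum, Finset.mul_sum, Finset.mul_sum]
        congr 1
        · field_simp
        · exact Finset.sum_congr rfl fun i _ => by ring
    _ ≤ _ := this
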